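/- Let m(n) be defined by m(0)=1 and (2n+1)·m(n) = ∑_{k=0}^{n-1} m(k)·m(n-1-k). Then m(n) ∼ 2·(2/π)^{2n+2} as n → ∞, i.e., m(n)·(π/2)^{2n+2} → 2. -/

import Mathlib

open Real Filter Finset

noncomputable def Lam (s : ℕ) : ℝ := ∑' a : ℕ, (1 / (2 * (a:ℝ) + 1)) ^ s

lemma two_mul_add_one_pos (a : ℕ) : (0:ℝ) < 2 * (a:ℝ) + 1 := by positivity

lemma base_le_one (a : ℕ) : 1 / (2 * (a:ℝ) + 1) ≤ 1 := by
  rw [div_le_one (two_mul_add_one_pos a)]; linarith [Nat.cast_nonneg (α := ℝ) a]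

lemma base_nonneg (a : ℕ) : (0:ℝ) ≤ 1 / (2 * (a:ℝ) + 1) := by positivity

lemma summable_sq : Summable (fun a : ℕ => (1 / ((a:ℝ) + 1)) ^ 2) := by
  have := (summable_nat_add_iff (f := fun n : ℕ => (1:ℝ) / (n:ℝ) ^ 2) 1).mpr
    (Real.summable_one_div_nat_pow.mpr one_lt_two)
  refine this.congr fun a => ?_
  push_cast
  rw [one_div, one_div, inv_pow]

lemma summable_base {s : ℕ} (hs : 2 ≤ s) : Summable (fun a : ℕ => (1 / (2 * (a:ℝ) + 1)) ^ s) := by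
  refine summable_sq.of_nonneg_of_le (fun a => by positivity) (fun a => ?_)
  calc (1 / (2 * (a:ℝ) + 1)) ^ s ≤ (1 / (2 * (a:ℝ) + 1)) ^ 2 :=
        pow_le_pow_of_le_one (base_nonneg a) (base_le_one a) hs
    _ ≤ (1 / ((a:ℝ) + 1)) ^ 2 := by
        apply pow_le_pow_left₀ (base_nonneg a)
        apply one_div_le_one_div_of_le (by positivity)
        linarith [Nat.cast_nonneg (α := ℝ) a]


lemma hasSum_harmonic_shift (M : ℕ) :
    HasSum (fun d : ℕ => 1 / ((d:ℝ) + 1) - 1 / ((d:ℝ) + 1 + M))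
      (∑ j ∈ range M, 1 / ((j:ℝ) + 1)) := by
  set u : ℕ → ℝ := fun d => 1 / ((d:ℝ) + 1) with hu
  have hnonneg : ∀ d : ℕ, 0 ≤ u d - u (d + M) := by
    intro d
    have : u (d + M) ≤ u d := by
      apply one_div_le_one_div_of_le (by positivity)
      push_cast; linarith [Nat.cast_nonneg (α := ℝ) M]
    linarith
  have hpartial : ∀ N : ℕ, ∑ d ∈ range N, (u d - u (d + M)) =
      ∑ j ∈ range M, u j - ∑ d ∈ Finset.Ico N (N + M), u d := by
    intro N
    rw [Finset.sum_sub_distrib]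
    have h1 : ∑ d ∈ range N, u (d + M) = ∑ d ∈ Finset.Ico M (M + N), u d := by
      rw [Finset.sum_Ico_eq_sum_range]
      simp only [Nat.add_sub_cancel_left]
      exact Finset.sum_congr rfl fun d _ => by rw [Nat.add_comm M d]
    have h2 : ∑ d ∈ Finset.Ico M (M + N), u d
        = ∑ d ∈ range (M + N), u d - ∑ d ∈ range M, u d :=
      Finset.sum_Ico_eq_sub _ (Nat.le_add_right _ _)
    have h3 : ∑ d ∈ Finset.Ico N (N + M), u d
        = ∑ d ∈ range (N + M), u d - ∑ d ∈ range N, u d :=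
      Finset.sum_Ico_eq_sub _ (Nat.le_add_right _ _)
    rw [h1, h2, h3, add_comm M N]
    ring
  have htail : Tendsto (fun N : ℕ => ∑ d ∈ Finset.Ico N (N + M), u d) atTop (nhds 0) := by
    have hb : ∀ N : ℕ, ∑ d ∈ Finset.Ico N (N + M), u d ≤ (M : ℝ) / (N + 1) := by
      intro N
      calc ∑ d ∈ Finset.Ico N (N + M), u d ≤ ∑ _d ∈ Finset.Ico N (N + M), 1 / ((N:ℝ) + 1) := by
            apply Finset.sum_le_sum
            intro d hd
            apply one_div_le_one_div_of_le (by positivity)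
            have := (Finset.mem_Ico.mp hd).1
            exact_mod_cast Nat.succ_le_succ this
        _ = (M : ℝ) / (N + 1) := by
            rw [Finset.sum_const, Nat.card_Ico]
            simp [Nat.add_sub_cancel_left, div_eq_mul_inv, one_div]
    have hlb : ∀ N : ℕ, (0:ℝ) ≤ ∑ d ∈ Finset.Ico N (N + M), u d :=
      fun N => Finset.sum_nonneg fun d _ => by positivity
    have : Tendsto (fun N : ℕ => (M : ℝ) / (N + 1)) atTop (nhds 0) := by
      apply Tendsto.div_atTop tendsto_const_nhds
      exact tendsto_atTop_add_const_right _ _ tendsto_natCast_atTop_atTop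
    exact squeeze_zero hlb hb this
  have hlim : Tendsto (fun N : ℕ => ∑ d ∈ range N, (u d - u (d + M))) atTop
      (nhds (∑ j ∈ range M, u j)) := by
    simp only [hpartial]
    simpa using (tendsto_const_nhds (x := ∑ j ∈ range M, u j)).sub htail
  have hsummable : Summable (fun d : ℕ => u d - u (d + M)) := by
    apply summable_of_sum_range_le hnonneg
    intro N
    rw [hpartial N]
    have := Finset.sum_nonneg (s := Finset.Ico N (N + M)) (f := u) fun d _ => by positivity
    linarith
  have := hsummable.hasSum
  have heq := tendsto_nhds_unique (hsummable.hasSum.tendsto_sum_nat) hlim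
  convert hsummable.hasSum using 1
  · funext d; push_cast [hu]; ring_nf
  · rw [← heq]

lemma hasSum_g (i : ℕ) :
    HasSum (fun j : ℕ => if j = i then 0 else 1 / ((j:ℝ) - i) - 1 / ((j:ℝ) + i + 1))
      (1 / (2 * (i:ℝ) + 1)) := by
  set g : ℕ → ℝ := fun j => if j = i then 0 else 1 / ((j:ℝ) - i) - 1 / ((j:ℝ) + i + 1) with hg
  have hfun : (fun d : ℕ => g (d + (i + 1)))
      = fun d : ℕ => 1 / ((d:ℝ) + 1) - 1 / ((d:ℝ) + 1 + (2 * i + 1 : ℕ)) := by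
    funext d
    have hne : d + (i + 1) ≠ i := by omega
    simp only [hg, hne, if_false]
    push_cast
    ring_nf
  have hshift : HasSum (fun d : ℕ => g (d + (i + 1)))
      (∑ j ∈ range (2 * i + 1), 1 / ((j:ℝ) + 1)) := by
    rw [hfun]; exact hasSum_harmonic_shift (2 * i + 1)
  have hmain := (hasSum_nat_add_iff (f := g) (i + 1)).mp hshift
  have hfin : ∑ j ∈ range (i + 1), g j = -(∑ j ∈ range (2 * i), 1 / ((j:ℝ) + 1)) := by
    rw [Finset.sum_range_succ]
    simp only [hg, if_pos rfl, add_zero]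
    have hsplit : ∑ j ∈ range i, (if j = i then (0:ℝ) else 1 / ((j:ℝ) - i) - 1 / ((j:ℝ) + i + 1))
        = ∑ j ∈ range i, (1 / ((j:ℝ) - i) - 1 / ((j:ℝ) + i + 1)) := by
      refine Finset.sum_congr rfl fun j hj => ?_
      rw [if_neg (by exact Nat.ne_of_lt (Finset.mem_range.mp hj))]
    rw [hsplit, Finset.sum_sub_distrib]
    have h1 : ∑ j ∈ range i, 1 / ((j:ℝ) - i) = -(∑ j ∈ range i, 1 / ((j:ℝ) + 1)) := by
      rw [← Finset.sum_range_reflect (fun j => 1 / ((j:ℝ) - i)) i, ← Finset.sum_neg_distrib]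
      refine Finset.sum_congr rfl fun j hj => ?_
      have hj' : j < i := Finset.mem_range.mp hj
      have : ((i - 1 - j : ℕ) : ℝ) = (i:ℝ) - 1 - j := by
        have : i - 1 - j + (j + 1) = i := by omega
        have := congrArg (Nat.cast : ℕ → ℝ) this
        push_cast at this
        linarith
      rw [this]
      rw [show (i:ℝ) - 1 - j - i = -(j + 1) by ring]
      rw [one_div, one_div, inv_neg]
    have h2 : ∑ j ∈ range i, 1 / ((j:ℝ) + i + 1)
        = ∑ j ∈ range (2 * i), 1 / ((j:ℝ) + 1) - ∑ j ∈ range i, 1 / ((j:ℝ) + 1) := by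
      have hIco : ∑ j ∈ Finset.Ico i (2 * i), (fun t : ℕ => 1 / ((t:ℝ) + 1)) j
          = ∑ j ∈ range (2 * i - i), 1 / (((i + j : ℕ):ℝ) + 1) := by
        rw [Finset.sum_Ico_eq_sum_range]
      have hsub := Finset.sum_Ico_eq_sub (fun t : ℕ => 1 / ((t:ℝ) + 1))
        (Nat.le_mul_of_pos_left i (by norm_num) : i ≤ 2 * i)
      rw [hsub] at hIco
      rw [show 2 * i - i = i by omega] at hIco
      rw [hIco]
      refine Finset.sum_congr rfl fun j _ => ?_
      push_cast; ring
    rw [h1, h2]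
    ring
  have hval : ∑ j ∈ range (2 * i + 1), 1 / ((j:ℝ) + 1) + ∑ j ∈ range (i + 1), g j
      = 1 / (2 * (i:ℝ) + 1) := by
    rw [hfin, Finset.sum_range_succ]
    push_cast
    ring
  rw [hval] at hmain
  exact hmain

lemma hasSum_A (i : ℕ) :
    HasSum (fun j : ℕ => if j = i then 0
        else 1 / ((2 * (j:ℝ) + 1) ^ 2 - (2 * (i:ℝ) + 1) ^ 2))
      (1 / (4 * (2 * (i:ℝ) + 1) ^ 2)) := by
  have h := (hasSum_g i).mul_left (1 / (4 * (2 * (i:ℝ) + 1)))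
  have hfun : (fun j : ℕ => 1 / (4 * (2 * (i:ℝ) + 1)) *
      (if j = i then 0 else 1 / ((j:ℝ) - i) - 1 / ((j:ℝ) + i + 1)))
      = fun j : ℕ => if j = i then 0
        else 1 / ((2 * (j:ℝ) + 1) ^ 2 - (2 * (i:ℝ) + 1) ^ 2) := by
    funext j
    by_cases hji : j = i
    · simp [hji]
    · rw [if_neg hji, if_neg hji]
      have hne : (j:ℝ) ≠ (i:ℝ) := by exact_mod_cast hji
      have h1 : (j:ℝ) - i ≠ 0 := sub_ne_zero.mpr hne
      have h2 : (j:ℝ) + i + 1 ≠ 0 := by positivity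
      have h3 : (2 * (i:ℝ) + 1) ≠ 0 := by positivity
      have h4 : (2 * (j:ℝ) + 1) ^ 2 - (2 * (i:ℝ) + 1) ^ 2
          = 4 * ((j:ℝ) - i) * ((j:ℝ) + i + 1) := by ring
      rw [h4]
      field_simp
      ring
  rw [hfun] at h
  have : 1 / (4 * (2 * (i:ℝ) + 1)) * (1 / (2 * (i:ℝ) + 1)) = 1 / (4 * (2 * (i:ℝ) + 1) ^ 2) := by
    field_simp
  rw [this] at h
  exact h


lemma sum_inv_sq_le (K : ℕ) : ∑ d ∈ range K, 1 / ((d:ℝ) + 1) ^ 2 ≤ 2 := by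
  have main : ∀ K : ℕ, ∑ d ∈ range K, 1 / ((d:ℝ) + 1) ^ 2 ≤ 2 - 2 / ((K:ℝ) + 1) := by
    intro K
    induction K with
    | zero => norm_num
    | succ K ih =>
      rw [Finset.sum_range_succ]
      have h1 : (0:ℝ) < (K:ℝ) + 1 := by positivity
      have h2 : (0:ℝ) < (K:ℝ) + 2 := by positivity
      have key : 1 / ((K:ℝ) + 1) ^ 2 ≤ 2 / ((K:ℝ) + 1) - 2 / ((K:ℝ) + 2) := by
        rw [div_sub_div _ _ (ne_of_gt h1) (ne_of_gt h2), div_le_div_iff₀ (by positivity) (by positivity)]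
        nlinarith [sq_nonneg ((K:ℝ) + 1)]
      have : ((K:ℕ):ℝ) + 1 + 1 = (K:ℝ) + 2 := by ring
      push_cast
      rw [show ((K:ℝ) + 1 + 1) = (K:ℝ) + 2 by ring]
      linarith
  have h := main K
  have : (0:ℝ) < 2 / ((K:ℝ) + 1) := by positivity
  linarith

lemma abs_gap (a b : ℕ) :
    |(2 * (a:ℝ) + 1) ^ 2 - (2 * (b:ℝ) + 1) ^ 2| = 4 * |(a:ℝ) - b| * ((a:ℝ) + b + 1) := by
  have h : (2 * (a:ℝ) + 1) ^ 2 - (2 * (b:ℝ) + 1) ^ 2 = 4 * ((a:ℝ) - b) * ((a:ℝ) + b + 1) := by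
    ring
  rw [h, abs_mul, abs_mul,
    abs_of_nonneg (by positivity : (0:ℝ) ≤ (a:ℝ) + b + 1),
    abs_of_nonneg (by norm_num : (0:ℝ) ≤ (4:ℝ))]

lemma sum_range_gap_le (b N : ℕ) :
    ∑ a ∈ range N, (if a = b then (0:ℝ)
      else 1 / |(2 * (a:ℝ) + 1) ^ 2 - (2 * (b:ℝ) + 1) ^ 2|) ≤ 1 := by
  set M₁ : ℕ → ℝ := fun a => if a < b then 1 / (4 * ((b:ℝ) - a) * ((b:ℝ) + 1)) else 0 with hM₁
  set M₂ : ℕ → ℝ := fun a => if b < a then 1 / (4 * ((a:ℝ) - b) ^ 2) else 0 with hM₂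
  have hM₁nonneg : ∀ a, 0 ≤ M₁ a := by
    intro a
    rw [hM₁]
    dsimp only
    split
    · have ha : (a:ℝ) < b := by exact_mod_cast ‹a < b›
      have : (0:ℝ) < (b:ℝ) - a := by linarith
      positivity
    · exact le_refl 0
  have hpoint : ∀ a : ℕ, (if a = b then (0:ℝ)
      else 1 / |(2 * (a:ℝ) + 1) ^ 2 - (2 * (b:ℝ) + 1) ^ 2|) ≤ M₁ a + M₂ a := by
    intro a
    rcases lt_trichotomy a b with h | h | h
    · rw [if_neg (Nat.ne_of_lt h), hM₁, hM₂]
      simp only [if_pos h, if_neg (by omega : ¬ b < a), add_zero]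
      rw [abs_gap]
      have hcast : (a:ℝ) < b := by exact_mod_cast h
      have hba : |(a:ℝ) - b| = (b:ℝ) - a := by
        rw [abs_sub_comm, abs_of_nonneg (by linarith)]
      rw [hba]
      apply one_div_le_one_div_of_le
      · have : (0:ℝ) < (b:ℝ) - a := by linarith
        positivity
      · have h0 : (0:ℝ) ≤ (a:ℝ) := Nat.cast_nonneg a
        have h2 : (0:ℝ) < (b:ℝ) - a := by linarith
        nlinarith
    · rw [if_pos h, hM₁, hM₂]
      simp only [if_neg (by omega : ¬ a < b), if_neg (by omega : ¬ b < a)]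
      norm_num
    · rw [if_neg (by omega : a ≠ b), hM₁, hM₂]
      simp only [if_neg (by omega : ¬ a < b), if_pos h, zero_add]
      rw [abs_gap]
      have hcast : (b:ℝ) < a := by exact_mod_cast h
      have hab : |(a:ℝ) - b| = (a:ℝ) - b := abs_of_nonneg (by linarith)
      rw [hab]
      apply one_div_le_one_div_of_le
      · have : (0:ℝ) < (a:ℝ) - b := by linarith
        positivity
      · have h0 : (0:ℝ) ≤ (b:ℝ) := Nat.cast_nonneg b
        have h2 : (0:ℝ) < (a:ℝ) - b := by linarith
        nlinarith
  have hsum1 : ∑ a ∈ range N, M₁ a ≤ 1 / 4 := by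
    have hsubset : ∑ a ∈ range N, M₁ a ≤ ∑ a ∈ range (N + b), M₁ a :=
      Finset.sum_le_sum_of_subset_of_nonneg (Finset.range_subset_range.mpr (by omega))
        (fun a _ _ => hM₁nonneg a)
    have heq : ∑ a ∈ range (N + b), M₁ a = ∑ a ∈ range b, 1 / (4 * ((b:ℝ) - a) * ((b:ℝ) + 1)) := by
      rw [← Finset.sum_subset (Finset.range_subset_range.mpr (by omega : b ≤ N + b))
        (fun a _ ha => by
          rw [hM₁]
          exact if_neg (by simp only [Finset.mem_range, not_lt] at ha; omega))]
      exact Finset.sum_congr rfl fun a ha => by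
        rw [hM₁]; exact if_pos (Finset.mem_range.mp ha)
    have hrefl : ∑ a ∈ range b, 1 / (4 * ((b:ℝ) - a) * ((b:ℝ) + 1))
        = ∑ a ∈ range b, 1 / (4 * ((a:ℝ) + 1) * ((b:ℝ) + 1)) := by
      rw [← Finset.sum_range_reflect (fun a => 1 / (4 * ((b:ℝ) - a) * ((b:ℝ) + 1))) b]
      refine Finset.sum_congr rfl fun a ha => ?_
      have ha' : a < b := Finset.mem_range.mp ha
      have hc : ((b - 1 - a : ℕ) : ℝ) = (b:ℝ) - 1 - a := by
        have h := congrArg (Nat.cast : ℕ → ℝ) (show b - 1 - a + (a + 1) = b by omega)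
        push_cast at h
        linarith
      rw [hc]
      ring_nf
    have hbound : ∑ a ∈ range b, 1 / (4 * ((a:ℝ) + 1) * ((b:ℝ) + 1)) ≤ 1 / 4 := by
      calc ∑ a ∈ range b, 1 / (4 * ((a:ℝ) + 1) * ((b:ℝ) + 1))
          ≤ ∑ _a ∈ range b, 1 / (4 * ((b:ℝ) + 1)) := by
            apply Finset.sum_le_sum
            intro a _
            apply one_div_le_one_div_of_le (by positivity)
            have h1 : (1:ℝ) ≤ (a:ℝ) + 1 := by
              have : (0:ℝ) ≤ (a:ℝ) := Nat.cast_nonneg a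
              linarith
            nlinarith [show (0:ℝ) < (b:ℝ) + 1 by positivity]
        _ = (b:ℝ) * (1 / (4 * ((b:ℝ) + 1))) := by
            rw [Finset.sum_const, Finset.card_range, nsmul_eq_mul]
        _ ≤ 1 / 4 := by
            rw [mul_one_div, div_le_div_iff₀ (by positivity) (by norm_num)]
            have : (0:ℝ) ≤ (b:ℝ) := Nat.cast_nonneg b
            linarith
    rw [heq, hrefl] at hsubset
    linarith
  have hsum2 : ∑ a ∈ range N, M₂ a ≤ 1 / 2 := by
    have heq : ∑ a ∈ range N, M₂ a = ∑ a ∈ Finset.Ico (b + 1) N, 1 / (4 * ((a:ℝ) - b) ^ 2) := by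
      rw [← Finset.sum_subset (s₁ := Finset.Ico (b + 1) N) (s₂ := range N)
        (fun a ha => Finset.mem_range.mpr (Finset.mem_Ico.mp ha).2)
        (fun a _ ha => by
          rw [hM₂]
          refine if_neg fun hba => ha (Finset.mem_Ico.mpr ⟨by omega, Finset.mem_range.mp ‹_›⟩))]
      exact Finset.sum_congr rfl fun a ha => by
        rw [hM₂]; exact if_pos (Finset.mem_Ico.mp ha).1
    rw [heq, Finset.sum_Ico_eq_sum_range]
    have hterm : ∀ d ∈ range (N - (b + 1)), 1 / (4 * (((b + 1 + d : ℕ):ℝ) - b) ^ 2)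
        = (1 / 4) * (1 / ((d:ℝ) + 1) ^ 2) := by
      intro d _
      push_cast
      rw [show ((b:ℝ) + 1 + d - b) = (d:ℝ) + 1 by ring]
      have h0 : ((d:ℝ) + 1) ^ 2 ≠ 0 := by positivity
      field_simp
    rw [Finset.sum_congr rfl hterm, ← Finset.mul_sum]
    have := sum_inv_sq_le (N - (b + 1))
    linarith
  calc ∑ a ∈ range N, (if a = b then (0:ℝ)
        else 1 / |(2 * (a:ℝ) + 1) ^ 2 - (2 * (b:ℝ) + 1) ^ 2|)
      ≤ ∑ a ∈ range N, (M₁ a + M₂ a) := Finset.sum_le_sum fun a _ => hpoint a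
    _ = ∑ a ∈ range N, M₁ a + ∑ a ∈ range N, M₂ a := Finset.sum_add_distrib
    _ ≤ 1 := by linarith

lemma summable_gap (b : ℕ) :
    Summable (fun a : ℕ => if a = b then (0:ℝ)
      else 1 / |(2 * (a:ℝ) + 1) ^ 2 - (2 * (b:ℝ) + 1) ^ 2|) := by
  apply summable_of_sum_range_le (c := 1)
  · intro a
    split
    · exact le_refl 0
    · positivity
  · exact fun N => sum_range_gap_le b N

lemma tsum_gap_le (b : ℕ) :
    ∑' a : ℕ, (if a = b then (0:ℝ)
      else 1 / |(2 * (a:ℝ) + 1) ^ 2 - (2 * (b:ℝ) + 1) ^ 2|) ≤ 1 := by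
  exact Summable.tsum_le_of_sum_range_le (summable_gap b) (fun N => sum_range_gap_le b N)

noncomputable def q (a : ℕ) : ℝ := (1 / (2 * (a:ℝ) + 1)) ^ 2

lemma q_pos (a : ℕ) : 0 < q a := by unfold q; positivity

lemma q_pow (a m : ℕ) : q a ^ m = (1 / (2 * (a:ℝ) + 1)) ^ (2 * m) := by
  rw [q, ← pow_mul]

lemma hasSum_Lam {s : ℕ} (hs : 2 ≤ s) :
    HasSum (fun a : ℕ => (1 / (2 * (a:ℝ) + 1)) ^ s) (Lam s) := (summable_base hs).hasSum

lemma hasSum_qpow {m : ℕ} (hm : 1 ≤ m) :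
    HasSum (fun a : ℕ => q a ^ m) (Lam (2 * m)) := by
  have := hasSum_Lam (s := 2 * m) (by omega)
  refine HasSum.congr_fun this fun a => q_pow a m


lemma gap_ne (a b : ℕ) (hab : a ≠ b) :
    (2 * (b:ℝ) + 1) ^ 2 - (2 * (a:ℝ) + 1) ^ 2 ≠ 0 := by
  intro h
  have hfac : (2 * (b:ℝ) + 1) ^ 2 - (2 * (a:ℝ) + 1) ^ 2
      = 4 * ((b:ℝ) - a) * ((a:ℝ) + b + 1) := by ring
  rw [hfac] at h
  have hpos : (0:ℝ) < (a:ℝ) + b + 1 := by positivity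
  have hba : (b:ℝ) - a = 0 := by
    rcases mul_eq_zero.mp h with h1 | h2
    · rcases mul_eq_zero.mp h1 with h3 | h4
      · norm_num at h3
      · exact h4
    · exact absurd h2 (ne_of_gt hpos)
  have : (b:ℝ) = (a:ℝ) := by linarith
  exact hab (by exact_mod_cast this.symm)

lemma pair_closed_form (n : ℕ) (hn : 1 ≤ n) (a b : ℕ) (hab : a ≠ b) :
    ∑ k ∈ range n, q a ^ (k + 1) * q b ^ (n - k)
      = q a ^ n * (1 / ((2 * (b:ℝ) + 1) ^ 2 - (2 * (a:ℝ) + 1) ^ 2))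
        + q b ^ n * (1 / ((2 * (a:ℝ) + 1) ^ 2 - (2 * (b:ℝ) + 1) ^ 2)) := by
  set x := q a with hx
  set y := q b with hy
  set A : ℝ := 2 * (a:ℝ) + 1 with hA
  set B : ℝ := 2 * (b:ℝ) + 1 with hB
  have hApos : (0:ℝ) < A := by rw [hA]; positivity
  have hBpos : (0:ℝ) < B := by rw [hB]; positivity
  have hAB : B ^ 2 - A ^ 2 ≠ 0 := gap_ne a b hab
  have hBA : A ^ 2 - B ^ 2 ≠ 0 := fun h => hAB (by linarith)
  have hxA : x = 1 / A ^ 2 := by rw [hx, q, hA, one_div, one_div, inv_pow]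
  have hyB : y = 1 / B ^ 2 := by rw [hy, q, hB, one_div, one_div, inv_pow]
  have hxy_sub : x - y = (B ^ 2 - A ^ 2) * (x * y) := by
    rw [hxA, hyB]
    field_simp
  have hxypos : (0:ℝ) < x * y := mul_pos (q_pos a) (q_pos b)
  have hxyne : x - y ≠ 0 := by
    rw [hxy_sub]; exact mul_ne_zero hAB (ne_of_gt hxypos)
  apply mul_right_cancel₀ hxyne
  have hLHS : (∑ k ∈ range n, x ^ (k + 1) * y ^ (n - k))
      = x * y * ∑ k ∈ range n, x ^ k * y ^ (n - 1 - k) := by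
    rw [Finset.mul_sum]
    refine Finset.sum_congr rfl fun k hk => ?_
    have hk' : k < n := Finset.mem_range.mp hk
    rw [show n - k = (n - 1 - k) + 1 by omega]
    ring
  rw [hLHS, mul_assoc, geom_sum₂_mul]
  rw [hxy_sub, hxA, hyB]
  field_simp
  ring

lemma diag_closed_form (n : ℕ) (a : ℕ) :
    ∑ k ∈ range n, q a ^ (k + 1) * q a ^ (n - k) = (n:ℝ) * q a ^ (n + 1) := by
  have h : ∀ k ∈ range n, q a ^ (k + 1) * q a ^ (n - k) = q a ^ (n + 1) := by
    intro k hk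
    have hk' : k < n := Finset.mem_range.mp hk
    rw [← pow_add, show k + 1 + (n - k) = n + 1 by omega]
  rw [Finset.sum_congr rfl h, Finset.sum_const, Finset.card_range, nsmul_eq_mul]

noncomputable def cc (n : ℕ) : ℕ × ℕ → ℝ :=
  fun p => ∑ k ∈ range n, q p.1 ^ (k + 1) * q p.2 ^ (n - k)

noncomputable def E₃ (n a b : ℕ) : ℝ :=
  if b = a then 0 else q b ^ n * (1 / ((2 * (a:ℝ) + 1) ^ 2 - (2 * (b:ℝ) + 1) ^ 2))

lemma abs_E₃_le (n a b : ℕ) (hn : 1 ≤ n) : |E₃ n a b| ≤ (1/4) * q b ^ n := by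
  rw [E₃]
  split
  · rw [abs_zero]
    exact le_of_lt (mul_pos (by norm_num) (pow_pos (q_pos b) n))
  · rw [abs_mul, abs_of_nonneg (le_of_lt (pow_pos (q_pos b) n)), abs_div, abs_one]
    rw [show |(2 * (a:ℝ) + 1) ^ 2 - (2 * (b:ℝ) + 1) ^ 2|
        = |(2 * (b:ℝ) + 1) ^ 2 - (2 * (a:ℝ) + 1) ^ 2| from abs_sub_comm _ _, abs_gap]
    rw [mul_comm ((1:ℝ)/4)]
    apply mul_le_mul_of_nonneg_left _ (le_of_lt (pow_pos (q_pos b) n))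
    have hba : b ≠ a := ‹_›
    have h1 : (1:ℝ) ≤ |(b:ℝ) - a| := by
      rcases Nat.lt_or_ge b a with h | h
      · have : (b:ℝ) < a := by exact_mod_cast h
        rw [abs_sub_comm, abs_of_pos (by linarith)]
        have : (b:ℝ) + 1 ≤ (a:ℝ) := by exact_mod_cast h
        linarith
      · have h' : a < b := by omega
        have : (a:ℝ) + 1 ≤ (b:ℝ) := by exact_mod_cast h'
        rw [abs_of_pos (by linarith)]
        linarith
    have h2 : (1:ℝ) ≤ (b:ℝ) + a + 1 := by
      have : (0:ℝ) ≤ (b:ℝ) + a := by positivity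
      linarith
    rw [div_le_div_iff₀ (by nlinarith) (by norm_num)]
    nlinarith

lemma summable_E₃ (n a : ℕ) (hn : 1 ≤ n) : Summable (fun b => E₃ n a b) := by
  refine Summable.of_norm_bounded ?_ (fun b => abs_E₃_le n a b hn)
  exact ((hasSum_qpow hn).summable).mul_left _

lemma hasSum_qn_div (n : ℕ) (hn : 1 ≤ n) :
    HasSum (fun b : ℕ => q b ^ n * (1 / (4 * (2 * (b:ℝ) + 1) ^ 2)))
      ((1/4) * Lam (2 * n + 2)) := by
  have h := (hasSum_Lam (s := 2 * n + 2) (by omega)).mul_left (1/4)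
  refine h.congr_fun fun b => ?_
  rw [q_pow, pow_add]
  rw [show (1 / (2 * (b:ℝ) + 1)) ^ 2 = 1 / (2 * (b:ℝ) + 1) ^ 2 by rw [div_pow, one_pow]]
  have hb : (2 * (b:ℝ) + 1) ^ 2 ≠ 0 := by positivity
  field_simp

lemma hasSum_section (n : ℕ) (hn : 1 ≤ n) (a : ℕ) :
    HasSum (fun b => cc n (a, b))
      ((n:ℝ) * q a ^ (n + 1) + q a ^ n * (1 / (4 * (2 * (a:ℝ) + 1) ^ 2))
        + ∑' b, E₃ n a b) := by
  have h1 : HasSum (fun b : ℕ => if b = a then (n:ℝ) * q a ^ (n + 1) else 0)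
      ((n:ℝ) * q a ^ (n + 1)) := hasSum_ite_eq a _
  have h2 : HasSum (fun b : ℕ => if b = a then 0
        else q a ^ n * (1 / ((2 * (b:ℝ) + 1) ^ 2 - (2 * (a:ℝ) + 1) ^ 2)))
      (q a ^ n * (1 / (4 * (2 * (a:ℝ) + 1) ^ 2))) := by
    have := (hasSum_A a).mul_left (q a ^ n)
    refine this.congr_fun fun b => ?_
    by_cases hba : b = a
    · simp [hba]
    · simp [hba]
  have h3 : HasSum (fun b => E₃ n a b) (∑' b, E₃ n a b) := (summable_E₃ n a hn).hasSum
  have hcomb := (h1.add h2).add h3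
  refine hcomb.congr_fun fun b => ?_
  by_cases hba : b = a
  · subst hba
    rw [cc, diag_closed_form, if_pos rfl, E₃, if_pos rfl]
    ring
  · rw [cc]
    have := pair_closed_form n hn a b (fun h => hba h.symm)
    dsimp only at this ⊢
    rw [this]
    simp only [E₃, if_neg hba]
    ring

lemma abs_E₃_eq (n a b : ℕ) :
    |E₃ n a b| = q b ^ n * (if a = b then (0:ℝ)
      else 1 / |(2 * (a:ℝ) + 1) ^ 2 - (2 * (b:ℝ) + 1) ^ 2|) := by
  by_cases hab : a = b
  · simp [E₃, hab]
  · rw [E₃, if_neg (fun h => hab h.symm), if_neg hab]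
    rw [abs_mul, abs_of_nonneg (le_of_lt (pow_pos (q_pos b) n)), abs_div, abs_one]

lemma summable_absE₃_a (n b : ℕ) : Summable (fun a => |E₃ n a b|) := by
  have := (summable_gap b).mul_left (q b ^ n)
  exact this.congr fun a => (abs_E₃_eq n a b).symm

lemma tsum_absE₃_le (n b : ℕ) : ∑' a, |E₃ n a b| ≤ q b ^ n := by
  have heq : ∑' a, |E₃ n a b| = q b ^ n * ∑' a, (if a = b then (0:ℝ)
      else 1 / |(2 * (a:ℝ) + 1) ^ 2 - (2 * (b:ℝ) + 1) ^ 2|) := by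
    rw [← tsum_mul_left]
    exact tsum_congr fun a => abs_E₃_eq n a b
  rw [heq]
  calc q b ^ n * ∑' a, (if a = b then (0:ℝ)
        else 1 / |(2 * (a:ℝ) + 1) ^ 2 - (2 * (b:ℝ) + 1) ^ 2|)
      ≤ q b ^ n * 1 := by
        apply mul_le_mul_of_nonneg_left (tsum_gap_le b) (le_of_lt (pow_pos (q_pos b) n))
    _ = q b ^ n := mul_one _

lemma summable_T (n : ℕ) (hn : 1 ≤ n) : Summable (fun p : ℕ × ℕ => E₃ n p.1 p.2) := by
  rw [← summable_abs_iff]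
  have hG : Summable (fun p : ℕ × ℕ => |E₃ n p.2 p.1|) := by
    refine (summable_prod_of_nonneg (fun p => abs_nonneg _)).mpr ⟨fun b => ?_, ?_⟩
    · exact summable_absE₃_a n b
    · apply Summable.of_nonneg_of_le (fun b => tsum_nonneg fun a => abs_nonneg _)
        (fun b => tsum_absE₃_le n b)
      exact (hasSum_qpow hn).summable
  have := (Equiv.prodComm ℕ ℕ).summable_iff.mpr hG
  exact this.congr fun p => rfl

lemma hasSum_h₃ (n : ℕ) (hn : 1 ≤ n) :
    HasSum (fun a => ∑' b, E₃ n a b) ((1/4) * Lam (2 * n + 2)) := by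
  have hT := summable_T n hn
  have step1 : HasSum (fun a => ∑' b, E₃ n a b) (∑' p : ℕ × ℕ, E₃ n p.1 p.2) :=
    hT.hasSum.prod_fiberwise (fun a => (summable_E₃ n a hn).hasSum)
  have hTsw : Summable (fun p : ℕ × ℕ => E₃ n p.2 p.1) := by
    have := (Equiv.prodComm ℕ ℕ).summable_iff.mpr hT
    exact this.congr fun p => rfl
  have hsec : ∀ b : ℕ, HasSum (fun a => E₃ n a b) (q b ^ n * (1 / (4 * (2 * (b:ℝ) + 1) ^ 2))) := by
    intro b
    have := (hasSum_A b).mul_left (q b ^ n)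
    refine this.congr_fun fun a => ?_
    by_cases hab : a = b
    · simp [E₃, hab]
    · rw [E₃, if_neg (fun h => hab h.symm), if_neg hab]
  have step2 : HasSum (fun b => q b ^ n * (1 / (4 * (2 * (b:ℝ) + 1) ^ 2)))
      (∑' p : ℕ × ℕ, E₃ n p.2 p.1) :=
    hTsw.hasSum.prod_fiberwise (fun b => hsec b)
  have hswapeq : (∑' p : ℕ × ℕ, E₃ n p.2 p.1) = ∑' p : ℕ × ℕ, E₃ n p.1 p.2 := by
    rw [← (Equiv.prodComm ℕ ℕ).tsum_eq (fun p : ℕ × ℕ => E₃ n p.1 p.2)]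
    rfl
  rw [hswapeq] at step2
  have := hasSum_qn_div n hn
  have hval := HasSum.unique step2 this
  rw [← hval]
  exact step1

set_option maxHeartbeats 1000000 in
lemma hasSum_prod_k (n k : ℕ) (hk : k < n) :
    HasSum (fun p : ℕ × ℕ => q p.1 ^ (k + 1) * q p.2 ^ (n - k))
      (Lam (2 * k + 2) * Lam (2 * (n - k))) := by
  have h1 : HasSum (fun a : ℕ => q a ^ (k + 1)) (Lam (2 * k + 2)) := by
    have := hasSum_qpow (m := k + 1) (by omega)
    rwa [show 2 * (k + 1) = 2 * k + 2 by ring] at this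
  have h2 : HasSum (fun b : ℕ => q b ^ (n - k)) (Lam (2 * (n - k))) :=
    hasSum_qpow (by omega)
  exact h1.mul h2 (h1.summable.mul_of_nonneg h2.summable
    (fun a => le_of_lt (pow_pos (q_pos a) _)) (fun b => le_of_lt (pow_pos (q_pos b) _)))

lemma summable_cc (n : ℕ) : Summable (cc n) := by
  have : (cc n) = fun p : ℕ × ℕ => ∑ k ∈ range n, q p.1 ^ (k + 1) * q p.2 ^ (n - k) := rfl
  rw [this]
  apply summable_sum
  intro k hk
  exact (hasSum_prod_k n k (Finset.mem_range.mp hk)).summable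

lemma lambda_identity (n : ℕ) (hn : 1 ≤ n) :
    ∑ k ∈ range n, Lam (2 * k + 2) * Lam (2 * (n - k)) = ((n:ℝ) + 1/2) * Lam (2 * n + 2) := by
  have hstep1 : ∑ k ∈ range n, Lam (2 * k + 2) * Lam (2 * (n - k)) = ∑' p : ℕ × ℕ, cc n p := by
    rw [show (∑ k ∈ range n, Lam (2 * k + 2) * Lam (2 * (n - k)))
        = ∑ k ∈ range n, ∑' p : ℕ × ℕ, q p.1 ^ (k + 1) * q p.2 ^ (n - k) from
      Finset.sum_congr rfl fun k hk =>
        ((hasSum_prod_k n k (Finset.mem_range.mp hk)).tsum_eq).symm]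
    rw [← Summable.tsum_finsetSum (fun k hk => (hasSum_prod_k n k (Finset.mem_range.mp hk)).summable)]
    rfl
  have h1 : HasSum (fun a : ℕ => (n:ℝ) * q a ^ (n + 1)) ((n:ℝ) * Lam (2 * n + 2)) := by
    have := (hasSum_qpow (m := n + 1) (by omega)).mul_left (n:ℝ)
    rwa [show 2 * (n + 1) = 2 * n + 2 by ring] at this
  have h2 := hasSum_qn_div n hn
  have h3 := hasSum_h₃ n hn
  have hparts := (h1.add h2).add h3
  have htotal : HasSum
      (fun a => (n:ℝ) * q a ^ (n + 1) + q a ^ n * (1 / (4 * (2 * (a:ℝ) + 1) ^ 2))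
        + ∑' b, E₃ n a b) (∑' p : ℕ × ℕ, cc n p) :=
    (summable_cc n).hasSum.prod_fiberwise (fun a => hasSum_section n hn a)
  have hval := HasSum.unique htotal hparts
  rw [hstep1, hval]
  ring


set_option maxHeartbeats 1000000 in
lemma Lam_two : Lam 2 = π ^ 2 / 8 := by
  have hζ : HasSum (fun n : ℕ => (1:ℝ) / (n:ℝ) ^ 2) (π ^ 2 / 6) := hasSum_zeta_two
  have he : HasSum (fun k : ℕ => (1:ℝ) / ((2 * k : ℕ):ℝ) ^ 2) (1/4 * (π ^ 2 / 6)) := by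
    refine (hζ.mul_left (1/4)).congr_fun fun k => ?_
    push_cast
    rw [mul_pow, one_div, one_div, mul_inv]
    norm_num
  have ho : HasSum (fun k : ℕ => (1:ℝ) / ((2 * k + 1 : ℕ):ℝ) ^ 2) (Lam 2) := by
    refine (hasSum_Lam (le_refl 2)).congr_fun fun k => ?_
    push_cast
    rw [div_pow, one_pow]
  have := hζ.unique (he.even_add_odd ho)
  linarith

lemma Lam_ge_one {s : ℕ} (hs : 2 ≤ s) : 1 ≤ Lam s := by
  have h := Summable.le_tsum (summable_base hs) 0 (fun j _ => by positivity)
  calc (1:ℝ) = (1 / (2 * ((0:ℕ):ℝ) + 1)) ^ s := by norm_num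
    _ ≤ Lam s := h

lemma Lam_le (n : ℕ) :
    Lam (2 * n + 2) ≤ 1 + (∑' a : ℕ, (1 / (2 * ((a:ℝ) + 1) + 1)) ^ 2) * (1/9 : ℝ) ^ n := by
  have hsummable := summable_base (s := 2 * n + 2) (by omega)
  have hshift : Summable (fun a : ℕ => (1 / (2 * (((a:ℕ):ℝ) + 1) + 1)) ^ 2) := by
    have := (summable_nat_add_iff 1).mpr (summable_base (s := 2) (le_refl 2))
    refine this.congr fun a => ?_
    push_cast
    ring_nf
  have hzero : Lam (2 * n + 2) = 1 + ∑' a : ℕ, (1 / (2 * ((a:ℝ) + 1) + 1)) ^ (2 * n + 2) := by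
    rw [Lam, Summable.tsum_eq_zero_add hsummable]
    norm_num
  rw [hzero]
  have hterm : ∀ a : ℕ, (1 / (2 * ((a:ℝ) + 1) + 1)) ^ (2 * n + 2)
      ≤ (1/9 : ℝ) ^ n * (1 / (2 * ((a:ℝ) + 1) + 1)) ^ 2 := by
    intro a
    have hx : (0:ℝ) ≤ 1 / (2 * ((a:ℝ) + 1) + 1) := by positivity
    have hx3 : 1 / (2 * ((a:ℝ) + 1) + 1) ≤ 1/3 := by
      rw [div_le_div_iff₀ (by positivity) (by norm_num)]
      have : (0:ℝ) ≤ (a:ℝ) := Nat.cast_nonneg a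
      linarith
    calc (1 / (2 * ((a:ℝ) + 1) + 1)) ^ (2 * n + 2)
        = ((1 / (2 * ((a:ℝ) + 1) + 1)) ^ 2) ^ n * (1 / (2 * ((a:ℝ) + 1) + 1)) ^ 2 := by
          rw [← pow_mul, ← pow_add]
      _ ≤ (1/9 : ℝ) ^ n * (1 / (2 * ((a:ℝ) + 1) + 1)) ^ 2 := by
          apply mul_le_mul_of_nonneg_right _ (by positivity)
          apply pow_le_pow_left₀ (by positivity)
          nlinarith
  have hsum_tail : Summable (fun a : ℕ => (1 / (2 * ((a:ℝ) + 1) + 1)) ^ (2 * n + 2)) := by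
    have := (summable_nat_add_iff 1).mpr hsummable
    refine this.congr fun a => ?_
    push_cast
    ring_nf
  have := Summable.tsum_le_tsum hterm hsum_tail (hshift.mul_left ((1/9 : ℝ) ^ n))
  rw [tsum_mul_left] at this
  linarith [this]

lemma Lam_tendsto : Tendsto (fun n : ℕ => Lam (2 * n + 2)) atTop (nhds 1) := by
  set C : ℝ := ∑' a : ℕ, (1 / (2 * ((a:ℝ) + 1) + 1)) ^ 2 with hC
  have hupper : Tendsto (fun n : ℕ => 1 + C * (1/9 : ℝ) ^ n) atTop (nhds 1) := by
    have h9 : Tendsto (fun n : ℕ => (1/9 : ℝ) ^ n) atTop (nhds 0) :=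
      tendsto_pow_atTop_nhds_zero_of_lt_one (by norm_num) (by norm_num)
    have := (h9.const_mul C).const_add 1
    simpa using this
  refine tendsto_of_tendsto_of_tendsto_of_le_of_le tendsto_const_nhds hupper
    (fun n => Lam_ge_one (by omega)) (fun n => Lam_le n)

lemma m_eq (m : ℕ → ℚ) (h0 : m 0 = 1)
    (hrec : ∀ n : ℕ, 1 ≤ n →
      (2 * (n : ℚ) + 1) * m n = ∑ k ∈ Finset.range n, m k * m (n - 1 - k)) :
    ∀ n : ℕ, (m n : ℝ) = 2 * (2/π) ^ (2 * n + 2) * Lam (2 * n + 2) := by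
  intro n
  induction n using Nat.strong_induction_on with
  | _ n ih =>
    rcases Nat.eq_zero_or_pos n with hn0 | hn1
    · subst hn0
      rw [h0, Lam_two]
      have hπ : π ≠ 0 := Real.pi_ne_zero
      push_cast
      field_simp
      ring
    · have hrecn := hrec n hn1
      have hcast : ((2 * (n:ℝ) + 1)) * (m n : ℝ)
          = ∑ k ∈ range n, (m k : ℝ) * (m (n - 1 - k) : ℝ) := by
        exact_mod_cast congrArg (fun x : ℚ => (x : ℝ)) hrecn
      have hterm : ∀ k ∈ range n, (m k : ℝ) * (m (n - 1 - k) : ℝ)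
          = 4 * (2/π) ^ (2 * n + 2) * (Lam (2 * k + 2) * Lam (2 * (n - k))) := by
        intro k hk
        have hk' : k < n := Finset.mem_range.mp hk
        rw [ih k hk', ih (n - 1 - k) (by omega)]
        rw [show 2 * (n - 1 - k) + 2 = 2 * (n - k) by omega]
        have hpow : ((2:ℝ)/π) ^ (2 * k + 2) * (2/π) ^ (2 * (n - k)) = (2/π) ^ (2 * n + 2) := by
          rw [← pow_add]
          congr 1
          omega
        rw [← hpow]
        ring
      rw [Finset.sum_congr rfl hterm, ← Finset.mul_sum, lambda_identity n hn1] at hcast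
      have h2n : (2 * (n:ℝ) + 1) ≠ 0 := by positivity
      apply mul_left_cancel₀ h2n
      rw [hcast]
      ring

theorem minimal_congestion_asymptotics (m : ℕ → ℚ) (h0 : m 0 = 1)
    (hrec : ∀ n : ℕ, 1 ≤ n →
      (2 * (n : ℚ) + 1) * m n = ∑ k ∈ Finset.range n, m k * m (n - 1 - k)) :
    Tendsto (fun n : ℕ => (m n : ℝ) * (π / 2) ^ (2 * n + 2)) atTop (nhds 2) := by
  have hπ : π ≠ 0 := Real.pi_ne_zero
  have hpoint : ∀ n : ℕ, (m n : ℝ) * (π / 2) ^ (2 * n + 2) = 2 * Lam (2 * n + 2) := by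
    intro n
    rw [m_eq m h0 hrec n]
    have : ((2:ℝ)/π) ^ (2 * n + 2) * (π / 2) ^ (2 * n + 2) = 1 := by
      rw [← mul_pow, div_mul_div_comm, mul_comm (2:ℝ) π, div_self (by positivity), one_pow]
    calc 2 * (2/π) ^ (2 * n + 2) * Lam (2 * n + 2) * (π / 2) ^ (2 * n + 2)
        = 2 * Lam (2 * n + 2) * ((2/π) ^ (2 * n + 2) * (π / 2) ^ (2 * n + 2)) := by ring
      _ = 2 * Lam (2 * n + 2) := by rw [this, mul_one]
  have : Tendsto (fun n : ℕ => 2 * Lam (2 * n + 2)) atTop (nhds 2) := by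
    have := Lam_tendsto.const_mul (2:ℝ)
    simpa using this
  refine this.congr fun n => (hpoint n).symm
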